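/- Let η : [0,∞) → [0,∞) be monotone decreasing with ∫_{ℝ^d} η(|x|) dx < ∞. Then for any a > 0 and any finite configuration x_1, ..., x_n ∈ ℝ^d with |x_i| > a for all i and pairwise distances |x_i − x_j| > a, one has Σ_{i=1}^n η(|x_i|) ≤ (4d)^{d/2} a^{−d} ∫_{ℝ^d} η(|x|) dx. -/

import Mathlib

open MeasureTheory

lemma aux_norm_le (d : ℕ) (w : EuclideanSpace ℝ (Fin d)) (c : ℝ) (hc : 0 ≤ c)
    (h : ∀ k, |w k| ≤ c) : ‖w‖ ≤ c * Real.sqrt d := by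
  rw [EuclideanSpace.norm_eq]
  have h1 : ∑ k, ‖w k‖ ^ 2 ≤ ∑ _k : Fin d, c ^ 2 :=
    Finset.sum_le_sum fun k _ => by
      rw [Real.norm_eq_abs]; exact pow_le_pow_left₀ (abs_nonneg _) (h k) 2
  calc Real.sqrt (∑ k, ‖w k‖ ^ 2) ≤ Real.sqrt (∑ _k : Fin d, c ^ 2) := Real.sqrt_le_sqrt h1
    _ = c * Real.sqrt d := by
        rw [Finset.sum_const, Finset.card_univ, Fintype.card_fin, nsmul_eq_mul,
          Real.sqrt_mul (by positivity), Real.sqrt_sq hc, mul_comm]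

theorem stmt15 (d : ℕ) (hd : 0 < d) (η : ℝ → ℝ) (hpos : ∀ r, 0 ≤ η r)
    (hmono : AntitoneOn η (Set.Ici 0))
    (hint : MeasureTheory.Integrable (fun x : EuclideanSpace ℝ (Fin d) => η ‖x‖))
    (a : ℝ) (ha : 0 < a) (m : ℕ) (x : Fin m → EuclideanSpace ℝ (Fin d))
    (hfar : ∀ i, a < ‖x i‖) (hsep : ∀ i j, i ≠ j → a < dist (x i) (x j)) :
    (∑ i, η ‖x i‖) ≤
      ((4 * (d : ℝ)) ^ ((d : ℝ) / 2) / a ^ d) *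
        ∫ y : EuclideanSpace ℝ (Fin d), η ‖y‖ := by
  have hd' : (0:ℝ) < d := by exact_mod_cast hd
  have hsd : (0:ℝ) < Real.sqrt d := Real.sqrt_pos.mpr hd'
  set s := a / (2 * Real.sqrt d) with hs_def
  have hs : 0 < s := by positivity
  have hsdiag : s * Real.sqrt d = a / 2 := by
    rw [hs_def]; field_simp
  have hxn : ∀ i, 0 < ‖x i‖ := fun i => ha.trans (hfar i)
  set z : Fin m → EuclideanSpace ℝ (Fin d) :=
    fun i => (1 - a / (4 * ‖x i‖)) • x i with hz_def
  have hza : ∀ i, ‖x i - z i‖ = a / 4 := by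
    intro i
    have h1 : x i - z i = (a / (4 * ‖x i‖)) • x i := by
      rw [hz_def]; module
    rw [h1, norm_smul, Real.norm_eq_abs, abs_of_nonneg (by positivity)]
    field_simp [(hxn i).ne']
  have hzn : ∀ i, ‖z i‖ = ‖x i‖ - a / 4 := by
    intro i
    have hc : 0 ≤ 1 - a / (4 * ‖x i‖) := by
      have : a / (4 * ‖x i‖) ≤ 1 := by
        rw [div_le_one (by have := hxn i; positivity)]
        nlinarith [hfar i]
      linarith
    rw [hz_def, norm_smul, Real.norm_eq_abs, abs_of_nonneg hc]
    field_simp [(hxn i).ne']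
  -- the cubes
  set Q : Fin m → Set (EuclideanSpace ℝ (Fin d)) := fun i =>
    (MeasurableEquiv.toLp 2 (Fin d → ℝ)).symm ⁻¹'
      (Set.univ.pi fun k => Set.Icc (z i k - s / 2) (z i k + s / 2)) with hQ_def
  have hmem : ∀ i (y : EuclideanSpace ℝ (Fin d)),
      y ∈ Q i ↔ ∀ k, y k ∈ Set.Icc (z i k - s / 2) (z i k + s / 2) := by
    intro i y
    simp only [hQ_def, Set.mem_preimage, Set.mem_univ_pi]
    exact Iff.rfl
  have hnear : ∀ i y, y ∈ Q i → ‖y - z i‖ ≤ a / 4 := by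
    intro i y hy
    have h1 : ‖y - z i‖ ≤ (s / 2) * Real.sqrt d := by
      apply aux_norm_le _ _ _ (by positivity)
      intro k
      have h2 := (hmem i y).mp hy k
      have h3 : (y - z i) k = y k - z i k := rfl
      rw [h3, abs_le]
      constructor <;> [linarith [h2.1]; linarith [h2.2]]
    calc ‖y - z i‖ ≤ (s/2) * Real.sqrt d := h1
      _ = a / 4 := by rw [div_mul_eq_mul_div, hsdiag]; ring
  have hle : ∀ i y, y ∈ Q i → ‖y‖ ≤ ‖x i‖ := by
    intro i y hy
    have hyz : z i + (y - z i) = y := by abel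
    calc ‖y‖ = ‖z i + (y - z i)‖ := by rw [hyz]
      _ ≤ ‖z i‖ + ‖y - z i‖ := norm_add_le _ _
      _ ≤ (‖x i‖ - a/4) + a/4 := by
          gcongr
          · rw [hzn i]
          · exact hnear i y hy
      _ = ‖x i‖ := by ring
  have hdist : ∀ i y, y ∈ Q i → dist (x i) y ≤ a / 2 := by
    intro i y hy
    calc dist (x i) y ≤ dist (x i) (z i) + dist (z i) y := dist_triangle _ _ _
      _ ≤ a/4 + a/4 := by
          gcongr
          · rw [dist_eq_norm, hza i]
          · rw [dist_eq_norm, norm_sub_rev]; exact hnear i y hy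
      _ = a / 2 := by ring
  have hdisj : ((Finset.univ : Finset (Fin m)) : Set (Fin m)).Pairwise (Function.onFun Disjoint Q) := by
    intro i _ j _ hij
    rw [Function.onFun, Set.disjoint_left]
    intro y hyi hyj
    have : dist (x i) (x j) ≤ a :=
      calc dist (x i) (x j) ≤ dist (x i) y + dist y (x j) := dist_triangle _ _ _
        _ ≤ a/2 + a/2 := by
            gcongr
            · exact hdist i y hyi
            · rw [dist_comm]; exact hdist j y hyj
        _ = a := by ring
    exact absurd this (not_le.mpr (hsep i j hij))
  have hBmeas : ∀ i, MeasurableSet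
      (Set.univ.pi fun k => Set.Icc (z i k - s / 2) (z i k + s / 2)) :=
    fun i => MeasurableSet.univ_pi fun k => measurableSet_Icc
  have hQmeas : ∀ i, MeasurableSet (Q i) :=
    fun i => (MeasurableEquiv.toLp 2 (Fin d → ℝ)).symm.measurable (hBmeas i)
  have hQvol : ∀ i, volume (Q i) = ENNReal.ofReal s ^ d := by
    intro i
    rw [hQ_def]
    rw [(EuclideanSpace.volume_preserving_symm_measurableEquiv_toLp (Fin d)).measure_preimage
      (hBmeas i).nullMeasurableSet, volume_pi_pi]
    have : ∀ k : Fin d, volume (Set.Icc (z i k - s / 2) (z i k + s / 2))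
        = ENNReal.ofReal s := by
      intro k
      rw [Real.volume_Icc]
      congr 1
      ring
    simp only [this, Finset.prod_const, Finset.card_univ, Fintype.card_fin]
  have h5 : ∀ i, η ‖x i‖ * s ^ d ≤ ∫ y in Q i, η ‖y‖ := by
    intro i
    have hfin : volume (Q i) ≠ ⊤ := by
      rw [hQvol i]; exact ENNReal.pow_ne_top ENNReal.ofReal_ne_top
    have := setIntegral_ge_of_const_le (hQmeas i) hfin
      (fun y hy => hmono (Set.mem_Ici.mpr (norm_nonneg y))
        (Set.mem_Ici.mpr (norm_nonneg (x i))) (hle i y hy))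
      hint.integrableOn
    have hvol : (volume (Q i)).toReal = s ^ d := by
      rw [hQvol i, ENNReal.toReal_pow, ENNReal.toReal_ofReal hs.le]
    rw [measureReal_def, hvol, smul_eq_mul, mul_comm] at this; exact this
  have key : (∑ i, η ‖x i‖) * s ^ d ≤ ∫ y : EuclideanSpace ℝ (Fin d), η ‖y‖ := by
    calc (∑ i, η ‖x i‖) * s ^ d = ∑ i, η ‖x i‖ * s ^ d := Finset.sum_mul _ _ _
      _ ≤ ∑ i, ∫ y in Q i, η ‖y‖ := Finset.sum_le_sum fun i _ => h5 i
      _ = ∫ y in ⋃ i ∈ Finset.univ, Q i, η ‖y‖ :=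
          (integral_biUnion_finset Finset.univ (fun i _ => hQmeas i) hdisj
            (fun i _ => hint.integrableOn)).symm
      _ ≤ ∫ y : EuclideanSpace ℝ (Fin d), η ‖y‖ :=
          setIntegral_le_integral hint (Filter.Eventually.of_forall fun y => hpos _)
  have hconst : (4 * (d : ℝ)) ^ ((d : ℝ) / 2) / a ^ d = 1 / s ^ d := by
    have h1 : (4 * (d : ℝ)) ^ ((d : ℝ) / 2) = (2 * Real.sqrt d) ^ d := by
      have h2 : (4 * (d : ℝ)) ^ ((d : ℝ) / 2) = ((4 * (d:ℝ)) ^ ((1:ℝ)/2)) ^ (d : ℕ) := by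
        rw [← Real.rpow_natCast ((4 * (d:ℝ)) ^ ((1:ℝ)/2)) d, ← Real.rpow_mul (by positivity)]
        ring_nf
      rw [h2, ← Real.sqrt_eq_rpow]
      congr 1
      rw [show (4 : ℝ) * d = 2^2 * d by norm_num, Real.sqrt_mul (by positivity),
        Real.sqrt_sq (by norm_num)]
    rw [h1, hs_def]
    field_simp
    rw [← mul_pow]; congr 1; field_simp
  rw [hconst, one_div, inv_mul_eq_div, le_div_iff₀ (by positivity)]
  exact key
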